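/- For every type ρ (argument or predicate type) there exists a natural number d (depending only on ρ) such that for every finite nonempty base set U with n = |U| ≥ 2, the cardinality of the two-valued semantic domain ⟦ρ⟧_U is at most exp_{order(ρ)}(n^d), where exp_0(x) = x and exp_{k+1}(x) = 2^{exp_k(x)}. -/

import Mathlib

/-- The three-valued truth domain: false, undef, true. -/
inductive Three : Type where
  | fls : Three
  | undef : Three
  | tru : Three
deriving DecidableEq

def Three.toNat : Three → ℕ
  | .fls => 0
  | .undef => 1
  | .tru => 2

/-- Truth order on `Three`, induced by `fls < undef < tru`. -/
def Three.le (a b : Three) : Prop := a.toNat ≤ b.toNat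

/-- Precision order on `Three`, induced by `undef ≺ fls` and `undef ≺ tru`. -/
def Three.prec (a b : Three) : Prop := a = .undef ∨ a = b

/-- Predicate types `π ::= o | ρ → π` where the argument `ρ` is either the
individual type `ι` (constructor `arrI`) or a predicate type (constructor `arrP`). -/
inductive PTy : Type where
  | o : PTy
  | arrI : PTy → PTy
  | arrP : PTy → PTy → PTy

/-- Argument types `ρ ::= ι | π`. -/
inductive ATy : Type where
  | iota : ATy
  | pred : PTy → ATy

/-- Two-valued semantics of predicate types over base set `U`. -/
def sem2 (U : Type) : PTy → Type
  | .o => Bool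
  | .arrI π => U → sem2 U π
  | .arrP ρ π => sem2 U ρ → sem2 U π

/-- Three-valued semantics: functions take *two-valued* arguments. -/
def sem3 (U : Type) : PTy → Type
  | .o => Three
  | .arrI π => U → sem3 U π
  | .arrP ρ π => sem2 U ρ → sem3 U π

/-- Two-valued semantics of argument types. -/
def semA (U : Type) : ATy → Type
  | .iota => U
  | .pred π => sem2 U π

/-- Pointwise (truth) order on the two-valued domains. -/
def le2 (U : Type) : (π : PTy) → sem2 U π → sem2 U π → Prop
  | .o, a, b => @LE.le Bool _ a b
  | .arrI π, f, g => ∀ d : U, le2 U π (f d) (g d)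
  | .arrP ρ π, f, g => ∀ d : sem2 U ρ, le2 U π (f d) (g d)

/-- Pointwise truth order on the three-valued domains. -/
def le3 (U : Type) : (π : PTy) → sem3 U π → sem3 U π → Prop
  | .o, a, b => Three.le a b
  | .arrI π, f, g => ∀ d : U, le3 U π (f d) (g d)
  | .arrP ρ π, f, g => ∀ d : sem2 U ρ, le3 U π (f d) (g d)

/-- Pointwise precision order on the three-valued domains. -/
def prec3 (U : Type) : (π : PTy) → sem3 U π → sem3 U π → Prop
  | .o, a, b => Three.prec a b
  | .arrI π, f, g => ∀ d : U, prec3 U π (f d) (g d)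
  | .arrP ρ π, f, g => ∀ d : sem2 U ρ, prec3 U π (f d) (g d)

/-- The everywhere-undefined element of the three-valued domain. -/
def undef3 (U : Type) : (π : PTy) → sem3 U π
  | .o => Three.undef
  | .arrI π => fun _ => undef3 U π
  | .arrP _ρ π => fun _ => undef3 U π

def tauo : Three → Bool × Bool
  | .fls => (false, false)
  | .undef => (false, true)
  | .tru => (true, true)

/-- The map `τ_π` from the three-valued domain to pairs of two-valued elements. -/
def tau (U : Type) : (π : PTy) → sem3 U π → sem2 U π × sem2 U π
  | .o, a => tauo a
  | .arrI π, f => (fun d => (tau U π (f d)).1, fun d => (tau U π (f d)).2)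
  | .arrP _ρ π, f => (fun d => (tau U π (f d)).1, fun d => (tau U π (f d)).2)

/-- The map `τ⁻¹_π` from pairs of two-valued elements to the three-valued domain
(on non-consistent pairs at base type its value is irrelevant junk). -/
def tauInv (U : Type) : (π : PTy) → sem2 U π → sem2 U π → sem3 U π
  | .o, a, b => cond a (cond b Three.tru Three.undef) (cond b Three.undef Three.fls)
  | .arrI π, f, g => fun d => tauInv U π (f d) (g d)
  | .arrP _ρ π, f, g => fun d => tauInv U π (f d) (g d)

/-- The embedding `ε_π` of the two-valued domain into the three-valued one. -/
def eps (U : Type) : (π : PTy) → sem2 U π → sem3 U π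
  | .o, b => cond b Three.tru Three.fls
  | .arrI π, f => fun d => eps U π (f d)
  | .arrP _ρ π, f => fun d => eps U π (f d)

/-- The order of a predicate type: `order(o) = 1`,
`order(ρ→π) = max (order ρ + 1) (order π)` with `order ι = 0`. -/
def orderP : PTy → ℕ
  | .o => 1
  | .arrI π => max 1 (orderP π)
  | .arrP ρ π => max (orderP ρ + 1) (orderP π)

/-- The order of an argument type. -/
def orderA : ATy → ℕ
  | .iota => 0
  | .pred π => orderP π

/-- Iterated exponential: `expk 0 x = x`, `expk (k+1) x = 2 ^ expk k x`. -/
def expk : ℕ → ℕ → ℕ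
  | 0, x => x
  | k+1, x => 2 ^ expk k x

/-- The product of the cardinalities of the argument domains of a predicate type. -/
noncomputable def argProd (U : Type) : PTy → ℕ
  | .o => 1
  | .arrI π => Nat.card U * argProd U π
  | .arrP ρ π => Nat.card (sem2 U ρ) * argProd U π

/-- `s` is a least upper bound of `S` with respect to the relation `R`. -/
def IsLubR {α : Type _} (R : α → α → Prop) (S : Set α) (s : α) : Prop :=
  (∀ a ∈ S, R a s) ∧ ∀ b, (∀ a ∈ S, R a b) → R s b

/-- `s` is a greatest lower bound of `S` with respect to the relation `R`. -/
def IsGlbR {α : Type _} (R : α → α → Prop) (S : Set α) (s : α) : Prop :=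
  (∀ a ∈ S, R s a) ∧ ∀ b, (∀ a ∈ S, R b a) → R b s

/-- The set of consistent pairs `L^c = {(x,y) ∈ L × L | x ≤ y}`. -/
def Lc (L : Type _) [CompleteLattice L] : Type _ := {p : L × L // p.1 ≤ p.2}

/-- The precision order on consistent pairs: `(x,y) ≼ (x',y')` iff `x ≤ x'` and `y' ≤ y`. -/
def precPair {L : Type _} [CompleteLattice L] (a b : Lc L) : Prop :=
  a.1.1 ≤ b.1.1 ∧ b.1.2 ≤ a.1.2

lemma expk_mono_right (k : ℕ) : ∀ {x y : ℕ}, x ≤ y → expk k x ≤ expk k y := by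
  induction k with
  | zero => intro x y h; exact h
  | succ k ih => intro x y h; exact Nat.pow_le_pow_right (by norm_num) (ih h)

lemma le_expk (k x : ℕ) : x ≤ expk k x := by
  induction k with
  | zero => rfl
  | succ k ih => exact ih.trans (Nat.le_of_lt (Nat.lt_two_pow_self))

lemma expk_succ_ge (k x : ℕ) : expk k x ≤ expk (k+1) x :=
  Nat.le_of_lt (Nat.lt_two_pow_self)

lemma expk_mono_left {j k : ℕ} (h : j ≤ k) (x : ℕ) : expk j x ≤ expk k x := by
  induction k with
  | zero => simp_all
  | succ k ih =>
    rcases Nat.lt_or_ge j (k+1) with h'|h'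
    · exact (ih (Nat.lt_succ_iff.mp h')).trans (expk_succ_ge k x)
    · have : j = k+1 := le_antisymm h h'
      simp [this]

lemma two_le_expk {x : ℕ} (k : ℕ) (h : 2 ≤ x) : 2 ≤ expk k x :=
  h.trans (le_expk k x)

lemma mul_expk (k : ℕ) {a b : ℕ} (ha : 2 ≤ a) (hb : 2 ≤ b) :
    expk k a * expk k b ≤ expk k (a * b) := by
  induction k with
  | zero => rfl
  | succ k ih =>
    show 2 ^ expk k a * 2 ^ expk k b ≤ 2 ^ expk k (a*b)
    rw [← pow_add]
    apply Nat.pow_le_pow_right (by norm_num)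
    exact (Nat.add_le_mul (two_le_expk k ha) (two_le_expk k hb)).trans ih

lemma one_le_orderP (π : PTy) : 1 ≤ orderP π := by
  induction π with
  | o => simp [orderP]
  | arrI π ih => simp [orderP]
  | arrP ρ π ihρ ihπ => simp [orderP]

instance sem2Finite (U : Type) [Finite U] (π : PTy) : Finite (sem2 U π) := by
  induction π with
  | o => exact inferInstanceAs (Finite Bool)
  | arrI π ih => exact inferInstanceAs (Finite (U → sem2 U π))
  | arrP ρ π ihρ ihπ => exact inferInstanceAs (Finite (sem2 U ρ → sem2 U π))

lemma key (π : PTy) :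
    ∃ d : ℕ, 1 ≤ d ∧ ∀ U : Type, Finite U → 2 ≤ Nat.card U →
      Nat.card (sem2 U π) ≤ expk (orderP π) (Nat.card U ^ d) := by
  induction π with
  | o =>
    refine ⟨1, le_refl _, ?_⟩
    intro U _ hU
    show Nat.card Bool ≤ 2 ^ (Nat.card U ^ 1)
    simp only [Nat.card_eq_fintype_card, Fintype.card_bool]
    calc 2 ≤ Nat.card U ^ 1 := by simpa using hU
    _ ≤ 2 ^ (Nat.card U ^ 1) := Nat.le_of_lt (Nat.lt_two_pow_self)
  | arrI π ih =>
    obtain ⟨d, hd1, hd⟩ := ih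
    refine ⟨2*d, by omega, fun U hfin hU => ?_⟩
    haveI := hfin
    obtain ⟨j, hj⟩ : ∃ j, orderP π = j + 1 :=
      ⟨orderP π - 1, by have := one_le_orderP π; omega⟩
    have horder : orderP (.arrI π) = j + 1 := by
      simp [orderP, hj]
    set n := Nat.card U with hn
    have hnd : 2 ≤ n ^ d := le_trans (by simpa using hU) (Nat.le_self_pow (by omega) n)
    have hcard : Nat.card (sem2 U (.arrI π)) = Nat.card (sem2 U π) ^ n := by
      show Nat.card (U → sem2 U π) = _
      rw [Nat.card_fun]
    rw [hcard, horder]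
    calc Nat.card (sem2 U π) ^ n ≤ (expk (j+1) (n ^ d)) ^ n :=
        Nat.pow_le_pow_left (by rw [← hj]; exact hd U hfin hU) n
    _ = 2 ^ (expk j (n ^ d) * n) := by rw [show expk (j+1) (n^d) = 2 ^ expk j (n^d) from rfl, ← pow_mul]
    _ ≤ 2 ^ (expk j (n ^ d) * expk j (n ^ d)) := by
        apply Nat.pow_le_pow_right (by norm_num)
        apply Nat.mul_le_mul_left
        exact le_trans (Nat.le_self_pow (by omega) n) (le_expk j _)
    _ ≤ 2 ^ expk j (n ^ d * n ^ d) :=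
        Nat.pow_le_pow_right (by norm_num) (mul_expk j hnd hnd)
    _ = expk (j+1) (n ^ (2*d)) := by
        show 2 ^ expk j (n ^ d * n ^ d) = 2 ^ expk j (n ^ (2*d))
        rw [← pow_add, two_mul]
  | arrP ρ π ihρ ihπ =>
    obtain ⟨dρ, hdρ1, hdρ⟩ := ihρ
    obtain ⟨dπ, hdπ1, hdπ⟩ := ihπ
    refine ⟨dρ + dπ, by omega, fun U hfin hU => ?_⟩
    haveI := hfin
    set n := Nat.card U with hn
    set m := orderP (.arrP ρ π) with hm
    have hm' : m = max (orderP ρ + 1) (orderP π) := rfl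
    obtain ⟨j, hj⟩ : ∃ j, m = j + 1 := ⟨m - 1, by have := one_le_orderP π; omega⟩
    obtain ⟨jπ, hjπ⟩ : ∃ jπ, orderP π = jπ + 1 :=
      ⟨orderP π - 1, by have := one_le_orderP π; omega⟩
    have hjπj : jπ ≤ j := by omega
    have hρj : orderP ρ ≤ j := by omega
    have hndρ : 2 ≤ n ^ dρ := le_trans (by simpa using hU) (Nat.le_self_pow (by omega) n)
    have hndπ : 2 ≤ n ^ dπ := le_trans (by simpa using hU) (Nat.le_self_pow (by omega) n)
    have hcard : Nat.card (sem2 U (.arrP ρ π)) =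
        Nat.card (sem2 U π) ^ Nat.card (sem2 U ρ) := by
      show Nat.card (sem2 U ρ → sem2 U π) = _
      rw [Nat.card_fun]
    rw [hcard, hj]
    calc Nat.card (sem2 U π) ^ Nat.card (sem2 U ρ)
        ≤ (2 ^ expk jπ (n ^ dπ)) ^ Nat.card (sem2 U ρ) := by
          apply Nat.pow_le_pow_left
          have := hdπ U hfin hU
          rwa [hjπ] at this
    _ = 2 ^ (expk jπ (n ^ dπ) * Nat.card (sem2 U ρ)) := by rw [← pow_mul]
    _ ≤ 2 ^ (expk j (n ^ dπ) * expk j (n ^ dρ)) := by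
        apply Nat.pow_le_pow_right (by norm_num)
        apply Nat.mul_le_mul (expk_mono_left hjπj _)
        exact le_trans (hdρ U hfin hU) (expk_mono_left hρj _)
    _ ≤ 2 ^ expk j (n ^ dπ * n ^ dρ) :=
        Nat.pow_le_pow_right (by norm_num) (mul_expk j hndπ hndρ)
    _ = expk (j+1) (n ^ (dρ + dπ)) := by
        show 2 ^ expk j (n ^ dπ * n ^ dρ) = 2 ^ expk j (n ^ (dρ + dπ))
        rw [← pow_add, Nat.add_comm]

theorem stmt10 (ρ : ATy) :
    ∃ d : ℕ, ∀ U : Type, Finite U → 2 ≤ Nat.card U →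
      Nat.card (semA U ρ) ≤ expk (orderA ρ) (Nat.card U ^ d) := by
  cases ρ with
  | iota =>
    refine ⟨1, fun U _ _ => ?_⟩
    show Nat.card U ≤ Nat.card U ^ 1
    simp
  | pred π =>
    obtain ⟨d, _, hd⟩ := key π
    exact ⟨d, fun U hf hU => hd U hf hU⟩
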